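/- arXiv:2512.16681 — 3 statements merged into one kernel-verified Lean document; each statement's English description precedes it below -/
import Mathlib

section
/- For every positive integer ν and every integer k with 1 ≤ k ≤ ν−1, the sum over ℓ from 0 to ν−1 of ℓ·sin(πk(2ℓ+1)/ν) equals −ν/(2·sin(πk/ν)). -/
open Real Finset

lemma sum_cos_eq_zero_aux (ν k : ℕ) (hν : 0 < ν)
    (hsin : Real.sin (π * k / ν) ≠ 0) :
    ∑ m ∈ Finset.range ν, Real.cos (2 * (π * k / ν) * m) = 0 := by
  have hνR : (ν : ℝ) ≠ 0 := Nat.cast_ne_zero.mpr hν.ne'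
  set θ : ℝ := π * k / ν with hθ
  set z : ℂ := Complex.exp (2 * θ * Complex.I) with hz
  have hz1 : z ≠ 1 := by
    intro h
    rw [hz, Complex.exp_eq_one_iff] at h
    obtain ⟨n, hn⟩ := h
    apply hsin
    have h' : (2 * θ : ℂ) * Complex.I = ((n : ℂ) * (2 * π)) * Complex.I := by
      rw [hn]; ring
    have h2 : (2 * θ : ℂ) = (n : ℂ) * (2 * π) := mul_right_cancel₀ Complex.I_ne_zero h'
    have h3 : (2 * θ : ℝ) = (n : ℝ) * (2 * π) := by exact_mod_cast h2
    have h4 : θ = (n : ℝ) * π := by linarith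
    rw [h4]
    exact Real.sin_int_mul_pi n
  have hpow : ∀ m : ℕ, z ^ m = Complex.exp ((2 * θ * m : ℝ) * Complex.I) := by
    intro m
    rw [hz, ← Complex.exp_nat_mul]
    congr 1
    push_cast
    ring
  have hzν : z ^ ν = 1 := by
    rw [hpow]
    have : (2 * θ * ν : ℝ) = k * (2 * π) := by
      rw [hθ]; field_simp
    rw [this]
    have := Complex.exp_int_mul_two_pi_mul_I (k : ℤ)
    rw [← this]
    congr 1
    push_cast
    ring
  have hgeom : ∑ m ∈ Finset.range ν, z ^ m = 0 := by
    rw [geom_sum_eq hz1, hzν, sub_self, zero_div]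
  have hre : ∀ m : ℕ, Real.cos (2 * θ * m) = (z ^ m).re := by
    intro m
    rw [hpow m, Complex.exp_ofReal_mul_I_re]
  calc ∑ m ∈ Finset.range ν, Real.cos (2 * θ * m)
      = ∑ m ∈ Finset.range ν, (z ^ m).re := by
        exact Finset.sum_congr rfl fun m _ => hre m
    _ = (∑ m ∈ Finset.range ν, z ^ m).re := by
        rw [Complex.re_sum]
    _ = 0 := by rw [hgeom]; rfl

theorem stmt_0 (ν : ℕ) (hν : 0 < ν) (k : ℕ) (hk1 : 1 ≤ k) (hk2 : k ≤ ν - 1) :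
    ∑ ℓ ∈ Finset.range ν,
      (ℓ : ℝ) * Real.sin (π * k * (2 * ℓ + 1) / ν)
      = -(ν : ℝ) / (2 * Real.sin (π * k / ν)) := by
  have hνR : (ν : ℝ) ≠ 0 := Nat.cast_ne_zero.mpr hν.ne'
  have hkν : k < ν := by omega
  set θ : ℝ := π * k / ν with hθ
  have hθpos : 0 < θ := by
    rw [hθ]
    apply div_pos _ (by exact_mod_cast hν)
    have : (0:ℝ) < k := by exact_mod_cast hk1
    positivity
  have hθlt : θ < π := by
    rw [hθ, div_lt_iff₀ (by exact_mod_cast hν)]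
    have hk : (k : ℝ) < ν := by exact_mod_cast hkν
    nlinarith [Real.pi_pos]
  have hsinpos : 0 < Real.sin θ := Real.sin_pos_of_pos_of_lt_pi hθpos hθlt
  have hsin : Real.sin θ ≠ 0 := hsinpos.ne'
  rw [eq_div_iff (by positivity)]
  have key : ∀ ℓ : ℕ, (ℓ : ℝ) * Real.sin (π * k * (2 * ℓ + 1) / ν) * (2 * Real.sin θ)
      = ((ℓ : ℝ) * Real.cos (2 * θ * ℓ) - ((ℓ : ℝ) + 1) * Real.cos (2 * θ * (ℓ + 1)))
        + Real.cos (2 * θ * (ℓ + 1)) := by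
    intro ℓ
    have harg : π * k * (2 * ℓ + 1) / ν = θ * (2 * ℓ + 1) := by rw [hθ]; ring
    have e1 : (2 * θ * ℓ + 2 * θ * (ℓ + 1)) / 2 = θ * (2 * ℓ + 1) := by ring
    have e2 : (2 * θ * ℓ - 2 * θ * (ℓ + 1)) / 2 = -θ := by ring
    have hcc : Real.cos (2 * θ * ℓ) - Real.cos (2 * θ * (ℓ + 1))
        = 2 * Real.sin (θ * (2 * ℓ + 1)) * Real.sin θ := by
      rw [Real.cos_sub_cos, e1, e2, Real.sin_neg]
      ring
    rw [harg]
    nlinarith [hcc]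
  have hmul : (∑ ℓ ∈ Finset.range ν, (ℓ : ℝ) * Real.sin (π * k * (2 * ℓ + 1) / ν))
      * (2 * Real.sin θ)
      = ∑ ℓ ∈ Finset.range ν,
        (((ℓ : ℝ) * Real.cos (2 * θ * ℓ) - ((ℓ : ℝ) + 1) * Real.cos (2 * θ * (ℓ + 1)))
          + Real.cos (2 * θ * (ℓ + 1))) := by
    rw [Finset.sum_mul]
    exact Finset.sum_congr rfl fun ℓ _ => key ℓ
  rw [hmul, Finset.sum_add_distrib]
  have htel : ∑ ℓ ∈ Finset.range ν,
      ((ℓ : ℝ) * Real.cos (2 * θ * ℓ) - ((ℓ : ℝ) + 1) * Real.cos (2 * θ * (ℓ + 1)))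
      = -(ν : ℝ) := by
    have := Finset.sum_range_sub' (fun m : ℕ => (m : ℝ) * Real.cos (2 * θ * m)) ν
    simp only [Nat.cast_zero, zero_mul] at this
    have heq : ∑ ℓ ∈ Finset.range ν,
        ((ℓ : ℝ) * Real.cos (2 * θ * ℓ) - ((ℓ : ℝ) + 1) * Real.cos (2 * θ * (ℓ + 1)))
        = ∑ ℓ ∈ Finset.range ν,
        ((fun m : ℕ => (m : ℝ) * Real.cos (2 * θ * m)) ℓ
          - (fun m : ℕ => (m : ℝ) * Real.cos (2 * θ * m)) (ℓ + 1)) := by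
      apply Finset.sum_congr rfl
      intro ℓ _
      push_cast
      ring_nf
    rw [heq, this]
    have hcν : Real.cos (2 * θ * ν) = 1 := by
      have harg : (2 * θ * ν : ℝ) = k * (2 * π) := by rw [hθ]; field_simp
      rw [harg, Real.cos_nat_mul_two_pi]
    rw [hcν]
    ring
  have hshift : ∑ ℓ ∈ Finset.range ν, Real.cos (2 * θ * (ℓ + 1)) = 0 := by
    have hsum0 : ∑ m ∈ Finset.range ν, Real.cos (2 * θ * m) = 0 :=
      sum_cos_eq_zero_aux ν k hν hsin
    have h1 : ∑ m ∈ Finset.range (ν + 1), Real.cos (2 * θ * m)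
        = (∑ ℓ ∈ Finset.range ν, Real.cos (2 * θ * (ℓ + 1))) + Real.cos (2 * θ * 0) := by
      rw [Finset.sum_range_succ']
      congr 1
      · exact Finset.sum_congr rfl fun i _ => by push_cast; ring_nf
      · norm_num
    have h2 : ∑ m ∈ Finset.range (ν + 1), Real.cos (2 * θ * m)
        = (∑ m ∈ Finset.range ν, Real.cos (2 * θ * m)) + Real.cos (2 * θ * ν) := by
      rw [Finset.sum_range_succ]
    have hcν : Real.cos (2 * θ * ν) = 1 := by
      have harg : (2 * θ * ν : ℝ) = k * (2 * π) := by rw [hθ]; field_simp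
      rw [harg, Real.cos_nat_mul_two_pi]
    rw [hsum0, hcν] at h2
    have h0 : Real.cos (2 * θ * 0) = 1 := by norm_num
    rw [h0] at h1
    linarith [h1.symm.trans h2]
  rw [htel, hshift]
  ring
end

section
/- For a positive integer ν and an integer r with 0 ≤ r ≤ ν−1, the sum ∑_{k=1}^{ν−1} e^{2πirk/ν} / sin²(πk/ν) equals (ν² − 6νr + 6r² − 1)/3. -/
open Complex Finset Real

lemma csum_id (n : ℕ) : (∑ j ∈ range n, (j:ℂ)) * 2 = (n:ℂ)^2 - n := by
  induction n with
  | zero => simp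
  | succ m ih => rw [Finset.sum_range_succ, add_mul, ih]; push_cast; ring

lemma csum_sq (n : ℕ) : (∑ j ∈ range n, (j:ℂ)^2) * 6 = 2*(n:ℂ)^3 - 3*(n:ℂ)^2 + n := by
  induction n with
  | zero => simp
  | succ m ih => rw [Finset.sum_range_succ, add_mul, ih]; push_cast; ring

lemma quad_sum (a : ℕ) (C : ℂ) :
    ∑ j ∈ range a, (j:ℂ)*(C - j)
      = C*((a:ℂ)^2-a)/2 - (2*(a:ℂ)^3-3*(a:ℂ)^2+a)/6 := by
  have h1 := csum_id a
  have h2 := csum_sq a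
  have h3 : ∑ j ∈ range a, (j:ℂ)*(C - j)
      = C * (∑ j ∈ range a, (j:ℂ)) - ∑ j ∈ range a, (j:ℂ)^2 := by
    rw [Finset.mul_sum, ← Finset.sum_sub_distrib]
    exact Finset.sum_congr rfl (fun j _ => by ring)
  rw [h3]
  linear_combination (C/2) * h1 - h2/6

lemma key_telescope (n : ℕ) (u : ℂ) (h1 : u^n = 1) (h2 : u ≠ 1) :
    (u - 1) * ∑ j ∈ range n, (j:ℂ) * u^j = n := by
  have hg : ∑ j ∈ range n, u^j = 0 := by
    rw [geom_sum_eq h2, h1]; simp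
  have ht : ∑ j ∈ range n, ((((j:ℕ)+1:ℕ):ℂ) * u^(j+1) - (j:ℂ) * u^j) = (n:ℂ) * u^n - 0 := by
    simpa using Finset.sum_range_sub (fun j => (j:ℂ) * u^j) n
  have h3 : ∑ j ∈ range n, ((u-1) * ((j:ℂ)*u^j) + u * u^j)
      = ∑ j ∈ range n, ((((j:ℕ)+1:ℕ):ℂ) * u^(j+1) - (j:ℂ) * u^j) := by
    apply Finset.sum_congr rfl; intro j _; push_cast; ring
  rw [ht, h1] at h3
  rw [Finset.sum_add_distrib, ← Finset.mul_sum, ← Finset.mul_sum, hg] at h3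
  simpa using h3

lemma exp_eq_one_iff_dvd (n : ℕ) (hn : 0 < n) (s : ℕ) :
    Complex.exp (2*(π:ℂ)*Complex.I*s/n) = 1 ↔ (n:ℕ) ∣ s := by
  constructor
  · intro h
    rw [Complex.exp_eq_one_iff] at h
    obtain ⟨m, hm⟩ := h
    have hn0 : (n:ℂ) ≠ 0 := Nat.cast_ne_zero.mpr hn.ne'
    have hpi : (2*(π:ℂ)*Complex.I) ≠ 0 := by
      simp [Real.pi_ne_zero, Complex.I_ne_zero]
    have hs : (s:ℂ) = m * n := by
      field_simp at hm
      have h2 : (s:ℂ) * (2*(π:ℂ)*Complex.I) = (m*n) * (2*(π:ℂ)*Complex.I) := by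
        linear_combination (2*(π:ℂ)*Complex.I) * hm
      exact mul_right_cancel₀ hpi h2
    have hs2 : (s:ℤ) = m * n := by exact_mod_cast hs
    have hdz : (n:ℤ) ∣ (s:ℤ) := ⟨m, by linear_combination hs2⟩
    exact_mod_cast hdz
  · rintro ⟨c, hc⟩
    subst hc
    have hn0 : (n:ℂ) ≠ 0 := Nat.cast_ne_zero.mpr hn.ne'
    have harg : 2*(π:ℂ)*Complex.I*(n*c)/n = c * (2*π*Complex.I) := by field_simp
    push_cast
    rw [harg]
    rw [show ((c:ℂ) * (2*π*Complex.I)) = ((c:ℤ):ℂ) * (2*π*Complex.I) by push_cast; ring]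
    exact Complex.exp_int_mul_two_pi_mul_I c

lemma root_sum (n : ℕ) (hn : 0 < n) (s : ℕ) :
    ∑ k ∈ range n, Complex.exp (2*(π:ℂ)*Complex.I*s/n)^k
      = if (n:ℕ) ∣ s then (n:ℂ) else 0 := by
  set x := Complex.exp (2*(π:ℂ)*Complex.I*s/n) with hx
  have hxn : x^n = 1 := by
    rw [hx, ← Complex.exp_nat_mul]
    have hn0 : (n:ℂ) ≠ 0 := Nat.cast_ne_zero.mpr hn.ne'
    rw [show (n:ℂ) * (2*(π:ℂ)*Complex.I*s/n) = 2*(π:ℂ)*Complex.I*(n*s)/n by ring,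
      show 2*(π:ℂ)*Complex.I*(n*s)/n = 2*(π:ℂ)*Complex.I*((n*s:ℕ):ℂ)/n by push_cast; ring]
    exact (exp_eq_one_iff_dvd n hn (n*s)).mpr ⟨s, rfl⟩
  by_cases hd : (n:ℕ) ∣ s
  · rw [if_pos hd]
    have : x = 1 := (exp_eq_one_iff_dvd n hn s).mpr hd
    simp [this]
  · rw [if_neg hd]
    have hx1 : x ≠ 1 := fun h => hd ((exp_eq_one_iff_dvd n hn s).mp h)
    rw [geom_sum_eq hx1, hxn]; simp

def m0 (ν r j : ℕ) : ℕ := (ν - (r+1+j) % ν) % ν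

lemma m0_lt (ν r j : ℕ) (hν : 0 < ν) : m0 ν r j < ν := Nat.mod_lt _ hν

lemma m0_dvd (ν r j : ℕ) (hν : 0 < ν) : ν ∣ (r + 1 + j + m0 ν r j) := by
  have hres : (r+1+j) % ν < ν := Nat.mod_lt _ hν
  rw [Nat.dvd_iff_mod_eq_zero, Nat.add_mod (r+1+j) (m0 ν r j), m0]
  rcases Nat.eq_zero_or_pos ((r+1+j) % ν) with h | h
  · simp [h]
  · have h1 : ν - (r+1+j) % ν < ν := by omega
    rw [Nat.mod_eq_of_lt h1, Nat.mod_eq_of_lt h1]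
    have h2 : (r+1+j) % ν + (ν - (r+1+j) % ν) = ν := by omega
    rw [h2, Nat.mod_self]

lemma m0_unique (ν r j m : ℕ) (hν : 0 < ν) (hm : m < ν) (hd : ν ∣ (r + 1 + j + m)) :
    m = m0 ν r j := by
  have h1 := m0_dvd ν r j hν
  have h2 := m0_lt ν r j hν
  have d1 : (ν:ℤ) ∣ ((r:ℤ) + 1 + j + m) := by exact_mod_cast hd
  have d2 : (ν:ℤ) ∣ ((r:ℤ) + 1 + j + m0 ν r j) := by exact_mod_cast h1
  have d3 : (ν:ℤ) ∣ ((m:ℤ) - m0 ν r j) := by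
    have := dvd_sub d1 d2; simpa using this
  have h4 : ((m:ℤ) - m0 ν r j) = 0 := by
    apply Int.eq_zero_of_abs_lt_dvd d3
    rw [abs_lt]; constructor <;> [push_cast; push_cast] <;> omega
  omega

lemma m0_closed (ν r j : ℕ) (hν : 0 < ν) (hr : r ≤ ν - 1) (hj : j < ν) :
    m0 ν r j = if r + 1 + j ≤ ν then ν - (r+1+j) else 2*ν - (r+1+j) := by
  rw [m0]
  rcases Nat.lt_trichotomy (r+1+j) ν with h | h | h
  · rw [if_pos h.le, Nat.mod_eq_of_lt h, Nat.mod_eq_of_lt (by omega)]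
  · rw [if_pos h.le, h, Nat.mod_self, Nat.sub_zero, Nat.mod_self]; omega
  · rw [if_neg (by omega)]
    have hlt : r + 1 + j - ν < ν := by omega
    have hmod : (r+1+j) % ν = r+1+j-ν := by
      rw [Nat.mod_eq_sub_mod (by omega), Nat.mod_eq_of_lt hlt]
    rw [hmod, Nat.mod_eq_of_lt (by omega)]
    omega

lemma T_val (ν r : ℕ) (hν : 0 < ν) (hr : r ≤ ν - 1) :
    ∑ j ∈ range ν, (j:ℂ) * (m0 ν r j : ℂ)
      = (ν:ℂ)*((ν:ℂ)-1)*((ν:ℂ)-2)/6 + (ν:ℂ)*(r:ℂ)*((ν:ℂ)-(r:ℂ))/2 := by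
  have hrν : r ≤ ν := by omega
  have step : ∀ j ∈ range ν, (j:ℂ) * (m0 ν r j : ℂ)
      = if r + 1 + j ≤ ν then (j:ℂ)*(((ν:ℂ) - ((r:ℂ)+1+(j:ℂ))) - 0)
        else (j:ℂ)*((2*(ν:ℂ) - ((r:ℂ)+1+(j:ℂ))) - 0) := by
    intro j hj
    rw [Finset.mem_range] at hj
    rw [m0_closed ν r j hν hr hj]
    by_cases h : r + 1 + j ≤ ν
    · rw [if_pos h, if_pos h]
      rw [Nat.cast_sub h]; push_cast; ring
    · rw [if_neg h, if_neg h]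
      have h2 : r + 1 + j ≤ 2*ν := by omega
      rw [Nat.cast_sub h2]; push_cast; ring
  rw [Finset.sum_congr rfl step]
  have hsplit : ∑ j ∈ range ν, (if r + 1 + j ≤ ν then (j:ℂ)*(((ν:ℂ) - ((r:ℂ)+1+(j:ℂ))) - 0)
        else (j:ℂ)*((2*(ν:ℂ) - ((r:ℂ)+1+(j:ℂ))) - 0))
      = (∑ j ∈ range (ν-r), (j:ℂ)*((((ν:ℂ)-((r:ℂ)+1))) - (j:ℂ)))
        + ∑ j ∈ Finset.Ico (ν-r) ν, (j:ℂ)*((2*(ν:ℂ)-((r:ℂ)+1)) - (j:ℂ)) := by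
    rw [Finset.range_eq_Ico, ← Finset.sum_Ico_consecutive _ (Nat.zero_le (ν-r)) (Nat.sub_le ν r)]
    congr 1
    · rw [← Finset.range_eq_Ico]
      apply Finset.sum_congr rfl
      intro j hj
      rw [Finset.mem_range] at hj
      rw [if_pos (by omega)]; ring
    · apply Finset.sum_congr rfl
      intro j hj
      rw [Finset.mem_Ico] at hj
      rw [if_neg (by omega)]; ring
  rw [hsplit]
  rw [Finset.sum_Ico_eq_sub _ (Nat.sub_le ν r)]
  rw [quad_sum, quad_sum, quad_sum]
  have hc : ((ν - r : ℕ):ℂ) = (ν:ℂ) - (r:ℂ) := by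
    rw [Nat.cast_sub hrν]
  rw [hc]
  ring

theorem stmt_2 (ν : ℕ) (hν : 0 < ν) (r : ℕ) (hr : r ≤ ν - 1) :
    ∑ k ∈ Finset.Icc 1 (ν - 1),
      Complex.exp (2 * Real.pi * Complex.I * r * k / ν) / ((Real.sin (π * k / ν) : ℂ))^2
      = ((ν : ℂ)^2 - 6 * ν * r + 6 * (r : ℂ)^2 - 1) / 3 := by
  have hν0 : (ν:ℂ) ≠ 0 := Nat.cast_ne_zero.mpr hν.ne'
  have hIcc : Finset.Icc 1 (ν-1) = (range ν).erase 0 := by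
    ext k; simp only [Finset.mem_Icc, Finset.mem_erase, Finset.mem_range]; omega
  have hterm : ∀ k ∈ (range ν).erase 0,
      Complex.exp (2 * Real.pi * Complex.I * r * k / ν) / ((Real.sin (π * k / ν) : ℂ))^2
        = -4 * (Complex.exp (2*(π:ℂ)*Complex.I*(k:ℂ)/(ν:ℂ)))^(r+1)
            * (∑ j ∈ range ν, (j:ℂ) * (Complex.exp (2*(π:ℂ)*Complex.I*(k:ℂ)/(ν:ℂ)))^j)^2 / (ν:ℂ)^2 := by
    intro k hk
    rw [Finset.mem_erase, Finset.mem_range] at hk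
    obtain ⟨hk0, hkν⟩ := hk
    set U : ℂ := Complex.exp (2*(π:ℂ)*Complex.I*(k:ℂ)/(ν:ℂ)) with hU
    have hU0 : U ≠ 0 := Complex.exp_ne_zero _
    have hU1 : U ≠ 1 := by
      intro h
      have hdvd := (exp_eq_one_iff_dvd ν hν k).mp h
      have := Nat.eq_zero_of_dvd_of_lt hdvd hkν
      omega
    have hUν : U^ν = 1 := by
      rw [hU, ← Complex.exp_nat_mul]
      rw [show (ν:ℂ) * (2*(π:ℂ)*Complex.I*(k:ℂ)/(ν:ℂ)) = 2*(π:ℂ)*Complex.I*((ν*k:ℕ):ℂ)/(ν:ℂ) by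
        push_cast; field_simp]
      exact (exp_eq_one_iff_dvd ν hν (ν*k)).mpr ⟨k, rfl⟩
    set S : ℂ := ∑ j ∈ range ν, (j:ℂ) * U^j with hSdef
    have hkey : (U - 1) * S = ν := key_telescope ν U hUν hU1
    have hU1' : U - 1 ≠ 0 := sub_ne_zero.mpr hU1
    have hS0 : S ≠ 0 := by
      intro h; rw [h, mul_zero] at hkey; exact hν0 hkey.symm
    have hnum : Complex.exp (2 * (π:ℂ) * Complex.I * r * k / ν) = U^r := by
      rw [hU, ← Complex.exp_nat_mul]
      congr 1; ring
    set z : ℂ := (π:ℂ)*(k:ℂ)/(ν:ℂ) with hz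
    set w : ℂ := Complex.exp (z * Complex.I) with hw
    have hw0 : w ≠ 0 := Complex.exp_ne_zero _
    have hw2 : w^2 = U := by
      rw [hw, hU, ← Complex.exp_nat_mul]
      congr 1; push_cast; ring
    have h2s : 2 * Complex.sin z = (w⁻¹ - w) * Complex.I := by
      have h := Complex.two_sin z
      rw [show -z*Complex.I = -(z*Complex.I) by ring, Complex.exp_neg] at h
      rw [hw]; exact h
    have h4 : (2 * Complex.sin z)^2 = -(w⁻¹ - w)^2 := by
      rw [h2s, mul_pow, Complex.I_sq]; ring
    have haux : ((w⁻¹ - w)*w)^2 = (1 - w^2)^2 := by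
      rw [sub_mul, inv_mul_cancel₀ hw0]; ring
    have h5 : (Complex.sin z)^2 * (4 * U) = -(U - 1)^2 := by
      rw [← hw2]
      linear_combination w^2 * h4 - haux
    have hsin : ((Real.sin (π * (k:ℝ) / (ν:ℝ)) : ℝ) : ℂ)^2 = -(U-1)^2/(4*U) := by
      have hcast : ((Real.sin (π * (k:ℝ) / (ν:ℝ)) : ℝ) : ℂ) = Complex.sin z := by
        rw [Complex.ofReal_sin]; congr 1; push_cast; ring
      rw [hcast, eq_div_iff (by simp [hU0] : (4:ℂ)*U ≠ 0)]
      exact h5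
    rw [hnum, hsin]
    have h2 : ((U-1)*S)^2 = (ν:ℂ)^2 := by rw [hkey]
    rw [show -4 * U^(r+1) * S^2 / (ν:ℂ)^2 = -4 * U^(r+1) * S^2 / ((U-1)*S)^2 by rw [h2]]
    field_simp
    ring
  rw [hIcc, Finset.sum_congr rfl hterm]
  -- now evaluate the sum of G over (range ν).erase 0
  set G : ℕ → ℂ := fun k => -4 * (Complex.exp (2*(π:ℂ)*Complex.I*(k:ℂ)/(ν:ℂ)))^(r+1)
      * (∑ j ∈ range ν, (j:ℂ) * (Complex.exp (2*(π:ℂ)*Complex.I*(k:ℂ)/(ν:ℂ)))^j)^2 / (ν:ℂ)^2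
    with hG
  have h_erase : ∑ k ∈ (range ν).erase 0, G k = (∑ k ∈ range ν, G k) - G 0 := by
    have h := Finset.add_sum_erase (range ν) G (Finset.mem_range.mpr hν)
    rw [← h]; ring
  have hG0 : G 0 = -4 * (∑ j ∈ range ν, (j:ℂ))^2 / (ν:ℂ)^2 := by
    rw [hG]
    simp
  have hinner : ∑ k ∈ range ν,
      (Complex.exp (2*(π:ℂ)*Complex.I*(k:ℂ)/(ν:ℂ)))^(r+1)
        * (∑ j ∈ range ν, (j:ℂ) * (Complex.exp (2*(π:ℂ)*Complex.I*(k:ℂ)/(ν:ℂ)))^j)^2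
      = (ν:ℂ) * ∑ j ∈ range ν, (j:ℂ) * (m0 ν r j : ℂ) := by
    have e2 : ∀ k ∈ range ν,
        (Complex.exp (2*(π:ℂ)*Complex.I*(k:ℂ)/(ν:ℂ)))^(r+1)
          * (∑ j ∈ range ν, (j:ℂ) * (Complex.exp (2*(π:ℂ)*Complex.I*(k:ℂ)/(ν:ℂ)))^j)^2
        = ∑ j ∈ range ν, ∑ m ∈ range ν,
            ((j:ℂ)*(m:ℂ)) * (Complex.exp (2*(π:ℂ)*Complex.I*(((r+1+j+m : ℕ)):ℂ)/(ν:ℂ)))^k := by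
      intro k _
      rw [pow_two, Finset.sum_mul_sum, Finset.mul_sum]
      apply Finset.sum_congr rfl; intro j _
      rw [Finset.mul_sum]
      apply Finset.sum_congr rfl; intro m _
      have hpow : (Complex.exp (2*(π:ℂ)*Complex.I*(((r+1+j+m : ℕ)):ℂ)/(ν:ℂ)))^k
          = (Complex.exp (2*(π:ℂ)*Complex.I*(k:ℂ)/(ν:ℂ)))^(r+1+j+m) := by
        rw [← Complex.exp_nat_mul, ← Complex.exp_nat_mul]
        congr 1; push_cast; ring
      rw [hpow]
      ring
    rw [Finset.sum_congr rfl e2, Finset.sum_comm]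
    have e3 : ∀ j ∈ range ν,
        (∑ k ∈ range ν, ∑ m ∈ range ν,
            ((j:ℂ)*(m:ℂ)) * (Complex.exp (2*(π:ℂ)*Complex.I*(((r+1+j+m : ℕ)):ℂ)/(ν:ℂ)))^k)
        = ((j:ℂ) * (m0 ν r j : ℂ)) * ν := by
      intro j _
      rw [Finset.sum_comm]
      have e4 : ∀ m ∈ range ν,
          (∑ k ∈ range ν, ((j:ℂ)*(m:ℂ)) * (Complex.exp (2*(π:ℂ)*Complex.I*(((r+1+j+m : ℕ)):ℂ)/(ν:ℂ)))^k)
          = ((j:ℂ)*(m:ℂ)) * (if ν ∣ (r+1+j+m) then (ν:ℂ) else 0) := by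
        intro m _
        rw [← Finset.mul_sum, root_sum ν hν (r+1+j+m)]
      rw [Finset.sum_congr rfl e4]
      rw [Finset.sum_eq_single_of_mem (m0 ν r j) (Finset.mem_range.mpr (m0_lt ν r j hν))]
      · rw [if_pos (by have := m0_dvd ν r j hν; omega)]
      · intro m hm hne
        rw [Finset.mem_range] at hm
        rw [if_neg, mul_zero]
        intro hd
        exact hne (m0_unique ν r j m hν hm (by omega))
    rw [Finset.sum_congr rfl e3, ← Finset.sum_mul]
    ring
  have hGsum : ∑ k ∈ range ν, G k
      = -4 * ((ν:ℂ) * ∑ j ∈ range ν, (j:ℂ) * (m0 ν r j : ℂ)) / (ν:ℂ)^2 := by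
    rw [← hinner]
    rw [hG, Finset.mul_sum, ← Finset.sum_div]
    congr 1
    exact Finset.sum_congr rfl (fun k _ => by ring)
  rw [h_erase, hGsum, hG0, T_val ν r hν hr]
  have hσ : (∑ j ∈ range ν, (j:ℂ)) = ((ν:ℂ)^2 - ν)/2 := by
    linear_combination (csum_id ν)/2
  rw [hσ]
  field_simp
  ring
end

section
/- For β, γ complex numbers with positive real part and ν complex, the integral ∫₀^∞ t^{ν−1} e^{−βt−γ/t} dt equals 2(γ/β)^{ν/2} K_ν(2√(βγ)), where K_ν is the modified Bessel function of the second kind and the square root is principal. -/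
open Complex MeasureTheory

/-- The modified Bessel function of the second kind, via its standard integral
representation `K_ν(z) = ∫₀^∞ e^{-z cosh t} cosh (ν t) dt` (valid for `Re z > 0`). -/
noncomputable def besselK (ν z : ℂ) : ℂ :=
  ∫ t in Set.Ioi (0 : ℝ), Complex.exp (-z * Real.cosh t) * Complex.cosh (ν * t)

namespace BKaux

open Set Filter Topology


/-- The entire integrand `e^{ν w - z cosh w}`. -/
noncomputable def g (ν z : ℂ) (w : ℂ) : ℂ := Complex.exp (ν * w - z * Complex.cosh w)

lemma g_diff (ν z : ℂ) : Differentiable ℂ (g ν z) := by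
  apply Complex.differentiable_exp.comp
  exact (differentiable_id.const_mul ν).sub (Complex.differentiable_cosh.const_mul z)

lemma g_cont (ν z : ℂ) : Continuous (g ν z) := (g_diff ν z).continuous

lemma cosh_lower (v : ℝ) : v ^ 2 / 8 ≤ Real.cosh v := by
  have h1 : Real.exp (|v|) / 2 ≤ Real.cosh v := by
    rw [← Real.cosh_abs, Real.cosh_eq]
    have := (Real.exp_pos (-|v|)).le
    linarith
  have h2 : (1 + |v| / 2) ^ 2 ≤ Real.exp (|v|) := by
    have h3 : 1 + |v| / 2 ≤ Real.exp (|v| / 2) := by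
      have := Real.add_one_le_exp (|v| / 2); linarith
    calc (1 + |v| / 2) ^ 2 ≤ Real.exp (|v| / 2) ^ 2 := by
          have h0 : (0:ℝ) ≤ 1 + |v| / 2 := by positivity
          exact pow_le_pow_left₀ h0 h3 2
      _ = Real.exp (|v|) := by rw [← Real.exp_nat_mul]; ring_nf
  have h4 : v ^ 2 / 4 ≤ (1 + |v| / 2) ^ 2 := by
    have : v ^ 2 = |v| ^ 2 := (_root_.sq_abs v).symm
    nlinarith [abs_nonneg v]
  linarith

lemma quad_bound {A δ t : ℝ} (hδ : 0 < δ) (hA : 0 ≤ A) :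
    A * t - δ * (t ^ 2 / 8) ≤ 2 * (A + 1) ^ 2 / δ - t := by
  rw [div_sub' hδ.ne', le_div_iff₀ hδ] at *
  nlinarith [sq_nonneg (δ * t - 4 * (A + 1))]

/-- Master pointwise bound for `g` on a horizontal line. -/
lemma norm_g_le (ν z : ℂ) {δ Y : ℝ} (hδ : 0 < δ) (v y : ℝ)
    (h1 : δ ≤ (z * Complex.exp (y * Complex.I)).re)
    (h2 : δ ≤ (z * Complex.exp (-(y * Complex.I))).re)
    (hY : |y| ≤ Y) :
    ‖g ν z (v + y * Complex.I)‖
      ≤ Real.exp (‖ν‖ * Y + 2 * (‖ν‖ + 1) ^ 2 / δ) * Real.exp (-|v|) := by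
  have hre : ((v : ℂ) + y * Complex.I) = ⟨v, y⟩ := by
    apply Complex.ext <;> simp
  have hnorm : ‖((v:ℂ) + y * Complex.I)‖ ≤ |v| + |y| := by
    refine (norm_add_le _ _).trans ?_
    simp [Complex.norm_real]
  -- real part of ν * w
  have hν : (ν * ((v:ℂ) + y * Complex.I)).re ≤ ‖ν‖ * (|v| + |y|) := by
    refine (Complex.re_le_norm _).trans ?_
    rw [norm_mul]
    exact mul_le_mul_of_nonneg_left (by simpa using hnorm)
      (norm_nonneg ν)
  -- real part of z * cosh w
  have hcosh : δ * Real.cosh v ≤ (z * Complex.cosh ((v:ℂ) + y * Complex.I)).re := by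
    have hc : Complex.cosh ((v:ℂ) + y * Complex.I)
        = (Complex.exp ((v:ℂ) + y*Complex.I) + Complex.exp (-((v:ℂ) + y*Complex.I))) / 2 :=
      rfl
    have he1 : Complex.exp ((v:ℂ) + y * Complex.I)
        = (Real.exp v : ℂ) * Complex.exp (y * Complex.I) := by
      rw [Complex.exp_add, Complex.ofReal_exp]
    have he2 : Complex.exp (-((v:ℂ) + y * Complex.I))
        = (Real.exp (-v) : ℂ) * Complex.exp (-(y * Complex.I)) := by
      rw [neg_add, Complex.exp_add, Complex.ofReal_exp, Complex.ofReal_neg]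
    have hre2 : ∀ x : ℂ, (2 * x).re = 2 * x.re := fun x => by simp
    have h2c : (z * (2 * Complex.cosh ((v:ℂ) + y * Complex.I))).re
        = Real.exp v * (z * Complex.exp (y*Complex.I)).re
          + Real.exp (-v) * (z * Complex.exp (-(y*Complex.I))).re := by
      have : z * (2 * Complex.cosh ((v:ℂ) + y * Complex.I))
          = (Real.exp v : ℂ) * (z * Complex.exp (y*Complex.I))
            + (Real.exp (-v) : ℂ) * (z * Complex.exp (-(y*Complex.I))) := by
        rw [Complex.two_cosh, he1, he2]; ring
      rw [this, Complex.add_re, Complex.re_ofReal_mul, Complex.re_ofReal_mul]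
    have h2c' : (z * (2 * Complex.cosh ((v:ℂ) + y * Complex.I))).re
        = 2 * (z * Complex.cosh ((v:ℂ) + y * Complex.I)).re := by
      rw [show z * (2 * Complex.cosh ((v:ℂ) + y * Complex.I))
          = 2 * (z * Complex.cosh ((v:ℂ) + y * Complex.I)) by ring, hre2]
    rw [Real.cosh_eq]
    have e1 : δ * Real.exp v ≤ Real.exp v * (z * Complex.exp (y*Complex.I)).re := by
      have := mul_le_mul_of_nonneg_right h1 (Real.exp_pos v).le
      linarith
    have e2 : δ * Real.exp (-v) ≤ Real.exp (-v) * (z * Complex.exp (-(y*Complex.I))).re := by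
      have := mul_le_mul_of_nonneg_right h2 (Real.exp_pos (-v)).le
      linarith
    linarith
  have key : ‖g ν z ((v:ℂ) + y * Complex.I)‖
      = Real.exp ((ν * ((v:ℂ) + y*Complex.I)).re - (z * Complex.cosh ((v:ℂ) + y*Complex.I)).re) := by
    rw [g, Complex.norm_exp, Complex.sub_re]
  rw [key, ← Real.exp_add]
  apply Real.exp_le_exp.mpr
  have hq := quad_bound (A := ‖ν‖) (t := |v|) hδ (norm_nonneg ν)
  have hν' : (ν * ((v:ℂ) + y*Complex.I)).re ≤ ‖ν‖ * |v| + ‖ν‖ * Y := by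
    have : ‖ν‖ * (|v| + |y|) ≤ ‖ν‖ * |v| + ‖ν‖ * Y := by
      rw [mul_add]
      exact add_le_add le_rfl (mul_le_mul_of_nonneg_left hY (norm_nonneg ν))
    linarith
  have hc' : δ * (|v| ^ 2 / 8) ≤ δ * Real.cosh v := by
    have := cosh_lower v
    rw [← Real.cosh_abs v] at this
    have h8 : |v| ^ 2 / 8 ≤ Real.cosh |v| := by
      simpa [_root_.sq_abs] using cosh_lower (|v|)
    rw [← Real.cosh_abs v]
    exact mul_le_mul_of_nonneg_left h8 hδ.le
  linarith


lemma exp_abs_lower (v : ℝ) : 1 + v ^ 2 ≤ 4 * Real.exp |v| := by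
  have h3 : 1 + |v| / 2 ≤ Real.exp (|v| / 2) := by
    have := Real.add_one_le_exp (|v| / 2); linarith
  have h2 : (1 + |v| / 2) ^ 2 ≤ Real.exp (|v|) := by
    calc (1 + |v| / 2) ^ 2 ≤ Real.exp (|v| / 2) ^ 2 := by
          have h0 : (0:ℝ) ≤ 1 + |v| / 2 := by positivity
          exact pow_le_pow_left₀ h0 h3 2
      _ = Real.exp (|v|) := by rw [← Real.exp_nat_mul]; ring_nf
  have h4 : v ^ 2 = |v| ^ 2 := (_root_.sq_abs v).symm
  nlinarith [abs_nonneg v]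

lemma integrable_exp_neg_abs' (C : ℝ) : Integrable (fun v : ℝ => C * Real.exp (-|v|)) := by
  apply Integrable.const_mul
  refine ((integrable_inv_one_add_sq).const_mul 4).mono' ?_ (ae_of_all _ fun v => ?_)
  · exact (Real.continuous_exp.comp (_root_.continuous_abs.neg)).aestronglyMeasurable
  · rw [Real.norm_eq_abs, Real.abs_exp]
    have hp : (0:ℝ) < 1 + v ^ 2 := by positivity
    have he := Real.exp_pos |v|
    have h := exp_abs_lower v
    have e1 : (Real.exp |v|)⁻¹ * Real.exp |v| = 1 := inv_mul_cancel₀ he.ne'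
    have e2 : (1 + v ^ 2)⁻¹ * (1 + v ^ 2) = 1 := inv_mul_cancel₀ hp.ne'
    have hi1 : 0 < (Real.exp |v|)⁻¹ := inv_pos.mpr he
    have hi2 : 0 < (1 + v ^ 2)⁻¹ := inv_pos.mpr hp
    rw [Real.exp_neg]
    nlinarith [mul_pos hi1 hi2]

lemma integrable_line (ν z : ℂ) {δ Y : ℝ} (hδ : 0 < δ) (y : ℝ)
    (h1 : δ ≤ (z * Complex.exp (y * Complex.I)).re)
    (h2 : δ ≤ (z * Complex.exp (-(y * Complex.I))).re)
    (hY : |y| ≤ Y) :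
    Integrable (fun v : ℝ => g ν z (v + y * Complex.I)) := by
  refine (integrable_exp_neg_abs' (Real.exp (‖ν‖ * Y + 2 * (‖ν‖ + 1) ^ 2 / δ))).mono'
    ?_ (ae_of_all _ fun v => norm_g_le ν z hδ v y h1 h2 hY)
  exact ((g_cont ν z).comp ((Complex.continuous_ofReal).add continuous_const)).aestronglyMeasurable

lemma shift (ν z : ℂ) {θ δ : ℝ} (hδ : 0 < δ)
    (h : ∀ y ∈ uIcc (-θ) (0:ℝ), δ ≤ (z * Complex.exp (y * Complex.I)).re ∧
      δ ≤ (z * Complex.exp (-(y * Complex.I))).re) :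
    (∫ v : ℝ, g ν z (v + (-θ : ℝ) * Complex.I)) = ∫ v : ℝ, g ν z v := by
  have hmem0 : (0:ℝ) ∈ uIcc (-θ) (0:ℝ) := right_mem_uIcc
  have hmemθ : -θ ∈ uIcc (-θ) (0:ℝ) := left_mem_uIcc
  have habs : ∀ y ∈ uIcc (-θ) (0:ℝ), |y| ≤ |θ| := by
    intro y hy
    rw [uIcc, mem_Icc] at hy
    rw [abs_le]
    constructor
    · refine le_trans (le_min ?_ ?_) hy.1
      · simp [le_abs_self]
      · simp [abs_nonneg]
    · refine le_trans hy.2 (max_le ?_ (abs_nonneg θ))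
      exact neg_le_abs θ
  set C₀ : ℝ := Real.exp (‖ν‖ * |θ| + 2 * (‖ν‖ + 1) ^ 2 / δ) with hC₀
  have hC₀pos : 0 < C₀ := Real.exp_pos _
  have hInt1 : Integrable (fun v : ℝ => g ν z (v + (-θ : ℝ) * Complex.I)) :=
    integrable_line ν z (Y := |θ|) hδ (-θ) (h _ hmemθ).1 (h _ hmemθ).2 (by simp)
  have hInt2 : Integrable (fun v : ℝ => g ν z v) := by
    have := integrable_line ν z (Y := |θ|) hδ 0 (by simpa using (h _ hmem0).1)
      (by simpa using (h _ hmem0).2) (by simp)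
    simpa using this
  -- vertical integrals
  have hVbound : ∀ x : ℝ, ‖∫ y in (-θ)..(0:ℝ), g ν z (x + y * Complex.I)‖
      ≤ (C₀ * Real.exp (-|x|)) * |θ| := by
    intro x
    have := intervalIntegral.norm_integral_le_of_norm_le_const
      (a := -θ) (b := 0) (C := C₀ * Real.exp (-|x|))
      (f := fun y => g ν z (x + y * Complex.I)) ?_
    · simpa using this
    · intro y hy
      have hy' : y ∈ uIcc (-θ) (0:ℝ) := Set.uIoc_subset_uIcc hy
      exact norm_g_le ν z hδ x y (h y hy').1 (h y hy').2 (habs y hy')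
  have hexp0 : Tendsto (fun T : ℝ => (C₀ * Real.exp (-T)) * |θ|) atTop (𝓝 0) := by
    have : Tendsto (fun T : ℝ => Real.exp (-T)) atTop (𝓝 0) :=
      Real.tendsto_exp_atBot.comp tendsto_neg_atTop_atBot
    simpa using ((this.const_mul C₀).mul_const |θ|)
  have hVtend : ∀ s : ℝ → ℝ, (∀ᶠ T in atTop, |s T| = T) →
      Tendsto (fun T : ℝ => ∫ y in (-θ)..(0:ℝ), g ν z (s T + y * Complex.I)) atTop (𝓝 0) := by
    intro s hs
    rw [tendsto_zero_iff_norm_tendsto_zero]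
    refine tendsto_of_tendsto_of_tendsto_of_le_of_le' tendsto_const_nhds hexp0
      (Eventually.of_forall fun T => norm_nonneg _) (hs.mono fun T hT => ?_)
    have := hVbound (s T)
    rwa [hT] at this
  have hVtend1 : Tendsto (fun T : ℝ =>
      ∫ y in (-θ)..(0:ℝ), g ν z (T + y * Complex.I)) atTop (𝓝 0) :=
    hVtend id ((eventually_ge_atTop (0:ℝ)).mono fun T hT => _root_.abs_of_nonneg hT)
  have hVtend2 : Tendsto (fun T : ℝ =>
      ∫ y in (-θ)..(0:ℝ), g ν z (-T + y * Complex.I)) atTop (𝓝 0) := by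
    have := hVtend (fun T => -T) ((eventually_ge_atTop (0:ℝ)).mono fun T hT => by
      rw [abs_neg, _root_.abs_of_nonneg hT])
    simpa using this
  -- rectangle identity
  have rect : ∀ T : ℝ, (∫ x in -T..T, g ν z (x + (-θ : ℝ) * Complex.I))
      = (∫ x in -T..T, g ν z x)
        + (Complex.I • (∫ y in (-θ)..(0:ℝ), g ν z (-T + y * Complex.I))
           - Complex.I • (∫ y in (-θ)..(0:ℝ), g ν z (T + y * Complex.I))) := by
    intro T
    have H := Complex.integral_boundary_rect_eq_zero_of_differentiableOn (g ν z)
      ((-T : ℝ) + (-θ : ℝ) * Complex.I) ((T : ℝ) + (0 : ℝ) * Complex.I)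
      ((g_diff ν z).differentiableOn)
    simp only [Complex.add_re, Complex.ofReal_re, Complex.mul_re, Complex.I_re,
      Complex.ofReal_im, Complex.I_im, Complex.add_im, Complex.mul_im,
      Complex.neg_re, Complex.neg_im,
      mul_zero, mul_one, zero_mul, sub_zero, zero_sub, add_zero, zero_add, neg_zero,
      Complex.ofReal_neg, Complex.ofReal_zero] at H
    simp only [Complex.ofReal_neg, Complex.ofReal_zero, zero_mul, add_zero] at H ⊢
    linear_combination H
  -- pass to the limit
  have T1 : Tendsto (fun T : ℝ => ∫ x in -T..T, g ν z (x + (-θ : ℝ) * Complex.I)) atTop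
      (𝓝 (∫ v : ℝ, g ν z (v + (-θ : ℝ) * Complex.I))) :=
    intervalIntegral_tendsto_integral hInt1 tendsto_neg_atTop_atBot tendsto_id
  have T2 : Tendsto (fun T : ℝ => ∫ x in -T..T, g ν z x) atTop (𝓝 (∫ v : ℝ, g ν z v)) :=
    intervalIntegral_tendsto_integral hInt2 tendsto_neg_atTop_atBot tendsto_id
  have T3 : Tendsto (fun T : ℝ => (∫ x in -T..T, g ν z x)
      + (Complex.I • (∫ y in (-θ)..(0:ℝ), g ν z (-T + y * Complex.I))
         - Complex.I • (∫ y in (-θ)..(0:ℝ), g ν z (T + y * Complex.I)))) atTop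
      (𝓝 ((∫ v : ℝ, g ν z v) + (Complex.I • (0:ℂ) - Complex.I • (0:ℂ)))) :=
    T2.add ((hVtend2.const_smul Complex.I).sub (hVtend1.const_smul Complex.I))
  have T3' := T3
  simp only [smul_zero, sub_zero, add_zero] at T3'
  have T1' : Tendsto (fun T : ℝ => ∫ x in -T..T, g ν z (x + (-θ : ℝ) * Complex.I)) atTop
      (𝓝 (∫ v : ℝ, g ν z v)) := by
    refine T3'.congr fun T => (rect T).symm
  exact tendsto_nhds_unique T1 T1'
end BKaux

open Set Filter Topology BKaux

theorem stmt_3 (β γ ν : ℂ) (hβ : 0 < β.re) (hγ : 0 < γ.re) :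
    (∫ t in Set.Ioi (0 : ℝ), (t : ℂ) ^ (ν - 1) * Complex.exp (-β * t - γ / t))
      = 2 * (γ / β) ^ (ν / 2) * besselK ν (2 * (β * γ) ^ ((1 : ℂ) / 2)) := by
  have hβ0 : β ≠ 0 := by intro h; rw [h] at hβ; simp at hβ
  have hγ0 : γ ≠ 0 := by intro h; rw [h] at hγ; simp at hγ
  set lb := Complex.log β with hlbdef
  set lg := Complex.log γ with hlgdef
  set s : ℂ := (lg - lb) / 2 with hsdef
  set u : ℂ := (lg + lb) / 2 with hudef
  have hlb : Complex.exp lb = β := Complex.exp_log hβ0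
  have hlg : Complex.exp lg = γ := Complex.exp_log hγ0
  have hargβ : |lb.im| < Real.pi / 2 := by
    rw [hlbdef, Complex.log_im]
    exact Complex.abs_arg_lt_pi_div_two_iff.mpr (Or.inl hβ)
  have hargγ : |lg.im| < Real.pi / 2 := by
    rw [hlgdef, Complex.log_im]
    exact Complex.abs_arg_lt_pi_div_two_iff.mpr (Or.inl hγ)
  set a : ℝ := max |lb.im| |lg.im| with hadef
  have ha2 : a < Real.pi / 2 := max_lt hargβ hargγ
  have ha0 : 0 ≤ a := le_max_of_le_left (abs_nonneg _)
  have hcos : 0 < Real.cos a :=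
    Real.cos_pos_of_mem_Ioo ⟨by linarith [Real.pi_pos], ha2⟩
  set θ : ℝ := s.im with hθdef
  set δ : ℝ := 2 * Real.exp u.re * Real.cos a with hδdef
  have hδ : 0 < δ := by positivity
  set z : ℂ := 2 * Complex.exp u with hzdef
  have hbi : |lb.im| ≤ a := le_max_left _ _
  have hgi : |lg.im| ≤ a := le_max_right _ _
  have hθval : θ = (lg.im - lb.im) / 2 := by
    rw [hθdef, hsdef, show (2:ℂ) = ((2:ℝ):ℂ) by norm_num, Complex.div_ofReal_im,
      Complex.sub_im]
  have huim : u.im = (lg.im + lb.im) / 2 := by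
    rw [hudef, show (2:ℂ) = ((2:ℝ):ℂ) by norm_num, Complex.div_ofReal_im, Complex.add_im]
  -- the strip condition
  have key1 : ∀ y ∈ uIcc (-θ) (0:ℝ), |u.im + y| ≤ a ∧ |u.im - y| ≤ a := by
    intro y hy
    rw [uIcc, mem_Icc] at hy
    have hy1 : -|θ| ≤ y := le_trans (le_min (by simp [le_abs_self]) (by simp [abs_nonneg])) hy.1
    have hy2 : y ≤ |θ| := le_trans hy.2 (max_le (neg_le_abs θ) (abs_nonneg θ))
    rw [abs_le] at hbi hgi
    rcases le_total lb.im lg.im with hbg | hbg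
    · have hθabs : |θ| = θ := abs_of_nonneg (by rw [hθval]; linarith)
      rw [hθabs, hθval] at hy1 hy2
      constructor <;> rw [abs_le] <;> constructor <;> rw [huim] <;> linarith
    · have hθabs : |θ| = -θ := abs_of_nonpos (by rw [hθval]; linarith)
      rw [hθabs, hθval] at hy1 hy2
      constructor <;> rw [abs_le] <;> constructor <;> rw [huim] <;> linarith
  have hre_exp : ∀ w : ℂ, (z * Complex.exp w).re
      = 2 * (Real.exp ((u + w).re) * Real.cos ((u + w).im)) := by
    intro w
    rw [hzdef, mul_assoc, ← Complex.exp_add]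
    rw [show (2 * Complex.exp (u + w)).re = 2 * (Complex.exp (u + w)).re by simp,
      Complex.exp_re]
  have hcosbound : ∀ x : ℝ, |x| ≤ a → Real.cos a ≤ Real.cos x := by
    intro x hx
    have := Real.cos_le_cos_of_nonneg_of_le_pi (abs_nonneg x) (by linarith [Real.pi_pos]) hx
    rwa [Real.cos_abs] at this
  have hstrip : ∀ y ∈ uIcc (-θ) (0:ℝ), δ ≤ (z * Complex.exp (y * Complex.I)).re ∧
      δ ≤ (z * Complex.exp (-(y * Complex.I))).re := by
    intro y hy
    obtain ⟨k1, k2⟩ := key1 y hy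
    constructor
    · rw [hre_exp]
      have him : (u + (y:ℂ) * Complex.I).im = u.im + y := by simp
      have hre : (u + (y:ℂ) * Complex.I).re = u.re := by simp
      rw [him, hre, hδdef]
      have := hcosbound _ k1
      nlinarith [Real.exp_pos u.re]
    · rw [hre_exp]
      have him : (u + -((y:ℂ) * Complex.I)).im = u.im - y := by simp; ring
      have hre : (u + -((y:ℂ) * Complex.I)).re = u.re := by simp
      rw [him, hre, hδdef]
      have := hcosbound _ k2
      nlinarith [Real.exp_pos u.re]
  have hshift := shift ν z hδ hstrip
  -- identification of constants
  have hsre : (s.re : ℂ) = s - θ * Complex.I := by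
    apply Complex.ext <;> simp [hθdef]
  have husl : u = lb + s := by rw [hudef, hsdef]; ring
  have hlgsu : lg - s = u := by rw [hudef, hsdef]; ring
  -- substitution x = ρ e^v
  set ρ : ℝ := Real.exp s.re with hρdef
  have hρ : 0 < ρ := Real.exp_pos _
  have himg : (fun v : ℝ => ρ * Real.exp v) '' univ = Ioi 0 := by
    rw [image_univ]
    ext x
    simp only [mem_range, mem_Ioi]
    constructor
    · rintro ⟨v, rfl⟩; positivity
    · intro hx
      refine ⟨Real.log (x / ρ), ?_⟩
      rw [Real.exp_log (by positivity)]
      field_simp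
  have hsub := integral_image_eq_integral_abs_deriv_smul (s := univ) MeasurableSet.univ
    (f := fun v : ℝ => ρ * Real.exp v) (f' := fun v : ℝ => ρ * Real.exp v)
    (fun x _ => ((Real.hasDerivAt_exp x).const_mul ρ).hasDerivWithinAt)
    (fun x1 _ x2 _ hx => Real.exp_injective (mul_left_cancel₀ hρ.ne' hx))
    (fun t : ℝ => (t:ℂ) ^ (ν - 1) * Complex.exp (-β * t - γ / t))
  rw [himg, setIntegral_univ] at hsub
  have hpt : ∀ v : ℝ, |ρ * Real.exp v| •
      ((↑(ρ * Real.exp v) : ℂ) ^ (ν - 1) *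
        Complex.exp (-β * ↑(ρ * Real.exp v) - γ / ↑(ρ * Real.exp v)))
      = Complex.exp (ν * s) * g ν z (↑v + ↑(-θ) * Complex.I) := by
    intro v
    have ht0 : 0 < ρ * Real.exp v := by positivity
    have htC : ((ρ * Real.exp v : ℝ) : ℂ) ≠ 0 := by
      exact_mod_cast ht0.ne'
    have htexp : ((ρ * Real.exp v : ℝ) : ℂ) = Complex.exp ((s.re : ℂ) + v) := by
      have h1 : ρ * Real.exp v = Real.exp (s.re + v) := by
        rw [hρdef, ← Real.exp_add]
      rw [h1, Complex.ofReal_exp, Complex.ofReal_add]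
    have hA : ((ρ * Real.exp v : ℝ) : ℂ) * ((ρ * Real.exp v : ℝ) : ℂ) ^ (ν - 1)
        = ((ρ * Real.exp v : ℝ) : ℂ) ^ ν := by
      conv_lhs => rw [show ((ρ * Real.exp v : ℝ) : ℂ) * ((ρ * Real.exp v : ℝ) : ℂ) ^ (ν - 1)
        = ((ρ * Real.exp v : ℝ) : ℂ) ^ (1:ℂ) * ((ρ * Real.exp v : ℝ) : ℂ) ^ (ν - 1) by
          rw [Complex.cpow_one]]
      rw [← Complex.cpow_add _ _ htC]
      ring_nf
    have hB : ((ρ * Real.exp v : ℝ) : ℂ) ^ ν = Complex.exp (((s.re : ℂ) + v) * ν) := by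
      rw [Complex.cpow_def_of_ne_zero htC]
      congr 1
      rw [← Complex.ofReal_log ht0.le]
      have h1 : Real.log (ρ * Real.exp v) = s.re + v := by
        rw [Real.log_mul hρ.ne' (Real.exp_pos v).ne']
        simp [hρdef, Real.log_exp]
      rw [h1]
      push_cast
      ring
    have hC : β * ((ρ * Real.exp v : ℝ) : ℂ)
        = Complex.exp (u + ((v:ℂ) - θ * Complex.I)) := by
      rw [htexp, ← hlb, ← Complex.exp_add, hsre, husl]
      ring_nf
    have hD : γ / ((ρ * Real.exp v : ℝ) : ℂ)
        = Complex.exp (u - ((v:ℂ) - θ * Complex.I)) := by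
      rw [htexp, ← hlg, ← Complex.exp_sub, hsre, ← hlgsu]
      ring_nf
    have hE : -β * ((ρ * Real.exp v : ℝ) : ℂ) - γ / ((ρ * Real.exp v : ℝ) : ℂ)
        = -(z * Complex.cosh ((v:ℂ) - θ * Complex.I)) := by
      rw [show -β * ((ρ * Real.exp v : ℝ) : ℂ) - γ / ((ρ * Real.exp v : ℝ) : ℂ)
          = -(β * ((ρ * Real.exp v : ℝ) : ℂ) + γ / ((ρ * Real.exp v : ℝ) : ℂ)) by ring,
        hC, hD, hzdef]
      rw [show 2 * Complex.exp u * Complex.cosh ((v:ℂ) - θ * Complex.I)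
          = Complex.exp u * (2 * Complex.cosh ((v:ℂ) - θ * Complex.I)) by ring,
        Complex.two_cosh, mul_add, ← Complex.exp_add, ← Complex.exp_add]
      ring_nf
    rw [_root_.abs_of_pos ht0, Complex.real_smul, ← mul_assoc, hA, hB, hE, g]
    rw [← Complex.exp_add, ← Complex.exp_add]
    congr 1
    rw [hsre]
    push_cast
    ring_nf
  -- fold into besselK
  have hInt : Integrable (fun v : ℝ => g ν z (v : ℂ)) := by
    have h0 := hstrip 0 right_mem_uIcc
    have := integrable_line ν z (Y := 1) hδ 0 (by simpa using h0.1) (by simpa using h0.2)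
      (by norm_num)
    simpa using this
  have hfold : (∫ v : ℝ, g ν z (v : ℂ)) = 2 * besselK ν z := by
    rw [← intervalIntegral.integral_Iic_add_Ioi (hInt.integrableOn) (hInt.integrableOn)]
    have hneg : (∫ v in Iic (0:ℝ), g ν z (v : ℂ)) = ∫ v in Ioi (0:ℝ), g ν z (↑(-v) : ℂ) := by
      have h := integral_comp_neg_Ioi (0:ℝ) (fun x : ℝ => g ν z (x : ℂ))
      simp only [neg_zero] at h
      exact h.symm
    rw [hneg, ← integral_add (hInt.comp_neg.integrableOn) (hInt.integrableOn)]
    rw [besselK, ← MeasureTheory.integral_const_mul]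
    apply setIntegral_congr_fun measurableSet_Ioi
    intro v _
    simp only
    rw [g, g]
    push_cast
    rw [Complex.cosh_neg]
    rw [show (2:ℂ) * (Complex.exp (-z * Complex.cosh ↑v) * Complex.cosh (ν * ↑v))
        = Complex.exp (-z * Complex.cosh ↑v) * (2 * Complex.cosh (ν * ↑v)) by ring,
      Complex.two_cosh, mul_add, ← Complex.exp_add, ← Complex.exp_add]
    ring_nf
  -- identify the right-hand side constants
  have hpow1 : (γ / β) ^ (ν / 2) = Complex.exp (ν * s) := by
    have hq : γ / β = Complex.exp (lg - lb) := by rw [Complex.exp_sub, hlb, hlg]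
    rw [hq, Complex.cpow_def_of_ne_zero (Complex.exp_ne_zero _)]
    rw [Complex.log_exp (by rw [Complex.sub_im]; rw [abs_lt] at hargβ hargγ; linarith)
      (by rw [Complex.sub_im]; rw [abs_lt] at hargβ hargγ; linarith [Real.pi_pos])]
    congr 1
    rw [hsdef]; ring
  have hpow2 : 2 * (β * γ) ^ ((1:ℂ) / 2) = z := by
    have hq : β * γ = Complex.exp (lb + lg) := by rw [Complex.exp_add, hlb, hlg]
    rw [hq, Complex.cpow_def_of_ne_zero (Complex.exp_ne_zero _)]
    rw [Complex.log_exp (by rw [Complex.add_im]; rw [abs_lt] at hargβ hargγ; linarith)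
      (by rw [Complex.add_im]; rw [abs_lt] at hargβ hargγ; linarith [Real.pi_pos])]
    rw [hzdef]
    congr 1
    rw [hudef]; ring
  rw [hpow2, hpow1]
  rw [hsub]
  rw [show (fun x : ℝ => |ρ * Real.exp x| •
      ((↑(ρ * Real.exp x) : ℂ) ^ (ν - 1) *
        Complex.exp (-β * ↑(ρ * Real.exp x) - γ / ↑(ρ * Real.exp x))))
      = fun v : ℝ => Complex.exp (ν * s) * g ν z (↑v + ↑(-θ) * Complex.I) from funext hpt]
  rw [MeasureTheory.integral_const_mul, hshift, hfold]
  ring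
end
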